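/- Fix d ∈ ℚ, d ≠ 0, and rational numbers Υ₀, Υ₁, Υ₂, … . Define formal power series V_i(u) = u^{2i} · exp(d·Υ₀·u²) · ∑_{η ⊢ i} u^{2ℓ(η)} d^{ℓ(η)−1} Υ^η / Aut(η) for i ≥ 1, and V₀(u) = (1/d)·exp(d·Υ₀·u²). Then for every i ≥ 1: ∑_{k=0}^{i} (−1)^{i−k} V_k'(u) · V_{i−k}(√−1 · u) = ((2i+2)/d) · Υ_i · u^{2i+1}, where V(√−1·u) denotes the series obtained by substituting iu for u (well-defined over ℚ since each V_j(iu) has real coefficients after simplification, each monomial degree being even or the whole expression being treated over ℚ[i] with the final identity holding in ℚ[[u]]). -/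

import Mathlib

open PowerSeries

namespace VRec

open Finset

noncomputable section

variable {R : Type*} [CommRing R] [Algebra ℚ R]

lemma coeff_derivativeFun' (f : PowerSeries R) (n : ℕ) :
    PowerSeries.coeff n (derivativeFun f) = PowerSeries.coeff (n + 1) f * (n + 1) :=
  coeff_derivative f n

lemma derivativeFun_C' (r : R) : derivativeFun (PowerSeries.C r) = 0 :=
  derivative_C

/-- automorphism factor of a partition, as a rational number -/
def aut {m : ℕ} (η : Nat.Partition m) : ℚ :=
  ∏ p ∈ η.parts.toFinset, (Nat.factorial (η.parts.count p) : ℚ)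

lemma aut_pos {m : ℕ} (η : Nat.Partition m) : 0 < aut η :=
  Finset.prod_pos fun p _ => by positivity

/-- the weight of a partition -/
def w (a : ℕ → R) {m : ℕ} (η : Nat.Partition m) : R :=
  (aut η)⁻¹ • (η.parts.map a).prod

/-- partition-sum power series (morally `exp (∑ a n x^n)`) -/
def pw (a : ℕ → R) : PowerSeries R :=
  PowerSeries.mk fun k => ∑ η : Nat.Partition k, w a η

lemma coeff_pw (a : ℕ → R) (k : ℕ) :
    (PowerSeries.coeff k) (pw a) = ∑ η : Nat.Partition k, w a η :=
  coeff_mk _ _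

lemma parts_partition_zero (η : Nat.Partition 0) : η.parts = 0 :=
  Multiset.eq_zero_of_forall_notMem fun _ h =>
    (η.parts_pos h).ne' <| Multiset.sum_eq_zero_iff.1 η.parts_sum _ h

lemma coeff_pw_zero (a : ℕ → R) : (PowerSeries.coeff 0) (pw a) = 1 := by
  rw [coeff_pw]
  rw [Finset.sum_eq_single_of_mem default (Finset.mem_univ _)
    (fun b _ hb => absurd (Subsingleton.elim b default) hb)]
  simp [w, aut, parts_partition_zero]

lemma aut_cons (j : ℕ) (s : Multiset ℕ) :
    (∏ p ∈ (j ::ₘ s).toFinset, (Nat.factorial ((j ::ₘ s).count p) : ℚ))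
      = (s.count j + 1) * ∏ p ∈ s.toFinset, (Nat.factorial (s.count p) : ℚ) := by
  classical
  have hcount : ∀ p ∈ s.toFinset.erase j, (j ::ₘ s).count p = s.count p := fun p hp =>
    Multiset.count_cons_of_ne (Finset.ne_of_mem_erase hp) _
  by_cases h : j ∈ s.toFinset
  · rw [Multiset.toFinset_cons, Finset.insert_eq_self.2 h]
    rw [← Finset.mul_prod_erase _ _ h, ← Finset.mul_prod_erase _ _ h,
      Finset.prod_congr rfl (fun p hp => by rw [hcount p hp]),
      Multiset.count_cons_self, Nat.factorial_succ]
    push_cast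
    ring
  · have hj0 : s.count j = 0 := by
      rwa [Multiset.count_eq_zero, ← Multiset.mem_toFinset]
    rw [Multiset.toFinset_cons, Finset.prod_insert h, Multiset.count_cons_self, hj0,
      Finset.prod_congr rfl (fun p hp => by
        rw [Multiset.count_cons_of_ne (fun hpj => h (by rwa [hpj] at hp))])]
    norm_num

/-- add a part `j` to a partition of `m - j` -/
def consP {m j : ℕ} (h1 : 1 ≤ j) (h2 : j ≤ m) (μ : Nat.Partition (m - j)) : Nat.Partition m where
  parts := j ::ₘ μ.parts
  parts_pos := fun hi => by
    rcases Multiset.mem_cons.1 hi with h | h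
    · omega
    · exact μ.parts_pos h
  parts_sum := by rw [Multiset.sum_cons, μ.parts_sum]; omega

lemma w_consP (a : ℕ → R) {m j : ℕ} (h1 : 1 ≤ j) (h2 : j ≤ m) (μ : Nat.Partition (m - j)) :
    a j * w a μ = ((μ.parts.count j + 1 : ℕ) : ℚ) • w a (consP h1 h2 μ) := by
  have hc : aut (consP h1 h2 μ) = (μ.parts.count j + 1) * aut μ := by
    simpa [aut, consP] using aut_cons j μ.parts
  rw [w, w, hc]
  rw [mul_inv, ← smul_smul, smul_smul ((μ.parts.count j + 1 : ℕ) : ℚ)]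
  push_cast
  rw [mul_inv_cancel₀ (by positivity), one_smul]
  simp only [consP, Multiset.map_cons, Multiset.prod_cons]
  rw [mul_smul_comm]

/-- remove a part `j` from a partition of `m` -/
def eraseP {m : ℕ} (j : ℕ) (η : Nat.Partition m) (hj : j ∈ η.parts) : Nat.Partition (m - j) where
  parts := η.parts.erase j
  parts_pos := fun hi => η.parts_pos (Multiset.mem_of_mem_erase hi)
  parts_sum := by
    have h2 : j + (η.parts.erase j).sum = m := by
      rw [← Multiset.sum_cons, Multiset.cons_erase hj, η.parts_sum]
    omega

lemma step_a (a : ℕ → R) (f : ℕ → ℚ) {m j : ℕ} (h1 : 1 ≤ j) (h2 : j ≤ m) :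
    f j • (a j * ∑ μ : Nat.Partition (m - j), w a μ)
      = ∑ η ∈ Finset.univ.filter (fun η : Nat.Partition m => j ∈ η.parts),
          ((η.parts.count j : ℚ) * f j) • w a η := by
  rw [Finset.mul_sum, Finset.smul_sum]
  refine Finset.sum_bij' (fun μ _ => consP h1 h2 μ)
    (fun η hη => eraseP j η (Finset.mem_filter.1 hη).2) ?_ ?_ ?_ ?_ ?_
  · intro μ _
    simp only [Finset.mem_filter, Finset.mem_univ, true_and, consP]
    exact Multiset.mem_cons_self _ _
  · intro η _; exact Finset.mem_univ _
  · intro μ _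
    ext1
    simp [consP, eraseP, Multiset.erase_cons_head]
  · intro η hη
    ext1
    simp only [consP, eraseP]
    exact Multiset.cons_erase (Finset.mem_filter.1 hη).2
  · intro μ _
    rw [w_consP a h1 h2 μ, smul_smul]
    congr 1
    have hcnt : Multiset.count j (consP h1 h2 μ).parts = μ.parts.count j + 1 := by
      simp [consP]
    rw [hcnt]
    push_cast
    ring

/-- The master recurrence for weighted partition sums. -/
lemma master (a : ℕ → R) (f : ℕ → ℚ) (m : ℕ) :
    ∑ η : Nat.Partition m, (η.parts.map f).sum • w a η
      = ∑ j ∈ Finset.Icc 1 m, f j • (a j * ∑ μ : Nat.Partition (m - j), w a μ) := by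
  have hstep : ∀ j ∈ Finset.Icc 1 m,
      f j • (a j * ∑ μ : Nat.Partition (m - j), w a μ)
        = ∑ η ∈ Finset.univ.filter (fun η : Nat.Partition m => j ∈ η.parts),
            ((η.parts.count j : ℚ) * f j) • w a η := by
    intro j hj
    rw [Finset.mem_Icc] at hj
    exact step_a a f hj.1 hj.2
  rw [Finset.sum_congr rfl hstep]
  simp only [Finset.sum_filter]
  rw [Finset.sum_comm]
  refine Finset.sum_congr rfl fun η _ => ?_
  rw [← Finset.sum_filter]
  have hfilter : (Finset.Icc 1 m).filter (fun j => j ∈ η.parts) = η.parts.toFinset := by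
    ext p
    simp only [Finset.mem_filter, Finset.mem_Icc, Multiset.mem_toFinset]
    refine ⟨fun h => h.2, fun h => ⟨⟨η.parts_pos h, ?_⟩, h⟩⟩
    exact le_trans (Multiset.le_sum_of_mem h) (le_of_eq η.parts_sum)
  rw [hfilter, ← Finset.sum_smul]
  congr 1
  rw [Finset.sum_multiset_map_count]
  refine Finset.sum_congr rfl fun p _ => ?_
  rw [nsmul_eq_mul]

def gser (a : ℕ → R) : PowerSeries R :=
  PowerSeries.mk fun n => ((n : ℚ) + 1) • a (n + 1)

lemma deriv_pw (a : ℕ → R) : derivativeFun (pw a) = gser a * pw a := by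
  ext m
  rw [coeff_derivativeFun', coeff_mul, Finset.Nat.sum_antidiagonal_eq_sum_range_succ_mk]
  have hcast : ∀ η : Nat.Partition (m + 1),
      ((η.parts.map (fun p : ℕ => (p : ℚ))).sum) = ((m : ℚ) + 1) := by
    intro η
    have h := Nat.cast_multiset_sum (R := ℚ) η.parts
    rw [η.parts_sum] at h
    rw [← h]
    push_cast
    ring
  have hL : ∑ η : Nat.Partition (m + 1), ((η.parts.map (fun p : ℕ => (p : ℚ))).sum) • w a η
      = (PowerSeries.coeff (m + 1)) (pw a) * ((m : R) + 1) := by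
    rw [Finset.sum_congr rfl (fun (η : Nat.Partition (m + 1)) _ => by rw [hcast η])]
    rw [← Finset.smul_sum, show ((m : ℚ) + 1) = ((m + 1 : ℕ) : ℚ) by push_cast; ring,
      Nat.cast_smul_eq_nsmul, nsmul_eq_mul, mul_comm, pw, coeff_mk]
    push_cast
    ring
  rw [← hL, master a (fun p : ℕ => (p : ℚ)) (m + 1)]
  refine Finset.sum_bij' (fun j _ => j - 1) (fun k _ => k + 1) ?_ ?_ ?_ ?_ ?_
  · intro j hj
    rw [Finset.mem_Icc] at hj
    rw [Finset.mem_range]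
    omega
  · intro k hk
    rw [Finset.mem_range] at hk
    rw [Finset.mem_Icc]
    omega
  · intro j hj
    rw [Finset.mem_Icc] at hj
    omega
  · intro k _
    omega
  · intro j hj
    rw [Finset.mem_Icc] at hj
    obtain ⟨h1, h2⟩ := hj
    dsimp only
    rw [gser, coeff_mk, pw, coeff_mk, smul_mul_assoc]
    have e1 : j - 1 + 1 = j := by omega
    have e2 : m - (j - 1) = m + 1 - j := by omega
    have e3 : ((j - 1 : ℕ) : ℚ) + 1 = (j : ℚ) := by
      rw [Nat.cast_sub h1]; ring
    rw [e1, e2, e3]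

lemma gser_neg (a : ℕ → R) : gser (fun n => -a n) = -gser a := by
  ext n
  simp [gser, coeff_mk]

lemma eq_one_of_deriv_zero (F : PowerSeries R) (h : derivativeFun F = 0)
    (h0 : (PowerSeries.coeff 0) F = 1) : F = 1 := by
  ext n
  cases n with
  | zero => simpa using h0
  | succ n =>
    have h1 : (PowerSeries.coeff n) (derivativeFun F) = 0 := by rw [h]; simp
    rw [coeff_derivativeFun'] at h1
    have h2 : ((n + 1 : ℕ) : ℚ) • (PowerSeries.coeff (n + 1)) F = 0 := by
      rw [Nat.cast_smul_eq_nsmul, nsmul_eq_mul]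
      push_cast
      rw [mul_comm]
      exact h1
    have h3 := congrArg (fun x => (((n + 1 : ℕ) : ℚ))⁻¹ • x) h2
    simp only [smul_zero] at h3
    rw [inv_smul_smul₀ (by positivity)] at h3
    rw [h3]
    simp [PowerSeries.coeff_one]

lemma pw_mul_pw_neg (a : ℕ → R) : pw a * pw (fun n => -a n) = 1 := by
  refine eq_one_of_deriv_zero _ ?_ ?_
  · rw [derivativeFun_mul, deriv_pw, deriv_pw, gser_neg]
    simp only [smul_eq_mul]
    ring
  · have h : (PowerSeries.coeff 0) (pw a * pw fun n => -a n)
        = (PowerSeries.coeff 0) (pw a) * (PowerSeries.coeff 0) (pw fun n => -a n) := by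
      simp [coeff_zero_eq_constantCoeff]
    rw [h, coeff_pw_zero, coeff_pw_zero, one_mul]

/-! ### The concrete setting over `ℂ⟦X⟧` -/

lemma qsmul_eq (q : ℚ) (f : PowerSeries ℂ) : q • f = PowerSeries.C (R := ℂ) (q : ℂ) * f := by
  ext n
  rw [PowerSeries.coeff_smul, coeff_C_mul, Rat.smul_def]

lemma rescale_C_mul_X_pow (r c : ℂ) (N : ℕ) :
    rescale r (PowerSeries.C (R := ℂ) c * X ^ N) = PowerSeries.C (R := ℂ) (r ^ N * c) * X ^ N := by
  ext n
  simp only [coeff_rescale, coeff_C_mul, coeff_X_pow, mul_ite, mul_one, mul_zero]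
  split_ifs with h
  · subst h; ring
  · rfl

lemma X_deriv_monomial (c : ℂ) (N : ℕ) :
    X * derivativeFun (PowerSeries.C (R := ℂ) c * X ^ N)
      = (N : ℂ) • (PowerSeries.C (R := ℂ) c * X ^ N) := by
  ext n
  rw [PowerSeries.coeff_smul]
  cases n with
  | zero =>
    rw [coeff_zero_X_mul, coeff_C_mul, coeff_X_pow, smul_eq_mul]
    split_ifs with h
    · subst h; simp
    · simp
  | succ n =>
    rw [coeff_succ_X_mul, coeff_derivativeFun', coeff_C_mul, coeff_X_pow, smul_eq_mul]
    split_ifs with h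
    · subst h; push_cast; ring
    · ring

lemma deriv_C_mul (c : ℂ) (f : PowerSeries ℂ) :
    derivativeFun (PowerSeries.C (R := ℂ) c * f) = PowerSeries.C (R := ℂ) c * derivativeFun f := by
  rw [derivativeFun_mul, derivativeFun_C', smul_zero, add_zero, smul_eq_mul]

lemma prod_map_monomial (c : ℕ → ℂ) (s : Multiset ℕ) :
    (s.map (fun p => PowerSeries.C (R := ℂ) (c p) * X ^ (2 * p + 2))).prod
      = PowerSeries.C (R := ℂ) ((s.map c).prod) * X ^ (2 * s.sum + 2 * Multiset.card s) := by
  induction s using Multiset.induction_on with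
  | empty => simp
  | cons j s ih =>
    rw [Multiset.map_cons, Multiset.prod_cons, ih, Multiset.map_cons, Multiset.prod_cons,
      Multiset.sum_cons, Multiset.card_cons, map_mul]
    have he : 2 * (j + s.sum) + 2 * (Multiset.card s + 1)
        = (2 * j + 2) + (2 * s.sum + 2 * Multiset.card s) := by ring
    rw [he, pow_add]
    ring

lemma prod_map_neg (f : ℕ → ℂ) (s : Multiset ℕ) :
    (s.map (fun p => -f p)).prod = (-1 : ℂ) ^ (Multiset.card s) * (s.map f).prod := by
  induction s using Multiset.induction_on with
  | empty => simp
  | cons j s ih =>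
    rw [Multiset.map_cons, Multiset.prod_cons, ih, Multiset.map_cons, Multiset.prod_cons,
      Multiset.card_cons, pow_succ]
    ring

lemma sum_map_affine (s : Multiset ℕ) :
    (s.map (fun p => 2 * p + 2)).sum = 2 * s.sum + 2 * Multiset.card s := by
  induction s using Multiset.induction_on with
  | empty => simp
  | cons j s ih =>
    rw [Multiset.map_cons, Multiset.sum_cons, ih, Multiset.sum_cons, Multiset.card_cons]
    ring

lemma derivativeFun_sum {s : Finset α} (f : α → PowerSeries R) :
    derivativeFun (∑ x ∈ s, f x) = ∑ x ∈ s, derivativeFun (f x) := by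
  classical
  induction s using Finset.induction_on with
  | empty =>
    simp only [Finset.sum_empty]
    ext n
    rw [coeff_derivativeFun']
    simp
  | insert x s hx ih =>
    rw [Finset.sum_insert hx, Finset.sum_insert hx, derivativeFun_add, ih]

lemma rescale_C' (r c : ℂ) : rescale r (PowerSeries.C (R := ℂ) c) = PowerSeries.C (R := ℂ) c := by
  ext n
  cases n with
  | zero => simp [coeff_rescale]
  | succ n => simp [coeff_rescale, coeff_C]

lemma prod_map_mul_left (c : ℂ) (f : ℕ → ℂ) (s : Multiset ℕ) :
    (s.map (fun p => c * f p)).prod = c ^ (Multiset.card s) * (s.map f).prod := by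
  induction s using Multiset.induction_on with
  | empty => simp
  | cons j s ih =>
    rw [Multiset.map_cons, Multiset.prod_cons, ih, Multiset.map_cons, Multiset.prod_cons,
      Multiset.card_cons, pow_succ]
    ring

section Concrete

variable (d : ℚ) (Υ : ℕ → ℚ)

/-- the coefficient sequence `a n = d Υ_n u^(2n+2)` -/
def ac (n : ℕ) : PowerSeries ℂ :=
  if n = 0 then 0 else PowerSeries.C (R := ℂ) ((d : ℂ) * (Υ n : ℂ)) * X ^ (2 * n + 2)

lemma ac_map_eq {m : ℕ} (η : Nat.Partition m) :
    η.parts.map (ac d Υ)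
      = η.parts.map (fun p => PowerSeries.C (R := ℂ) ((d : ℂ) * (Υ p : ℂ)) * X ^ (2 * p + 2)) :=
  Multiset.map_congr rfl fun p hp => by
    rw [ac, if_neg (η.parts_pos hp).ne']

lemma w_ac {m : ℕ} (η : Nat.Partition m) :
    w (ac d Υ) η = (aut η)⁻¹ •
      (PowerSeries.C (R := ℂ) ((η.parts.map (fun p => (d : ℂ) * (Υ p : ℂ))).prod)
        * X ^ (2 * m + 2 * Multiset.card η.parts)) := by
  rw [w, ac_map_eq, prod_map_monomial (fun p => (d : ℂ) * (Υ p : ℂ)), η.parts_sum]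

lemma w_nac {m : ℕ} (η : Nat.Partition m) :
    w (fun n => -(ac d Υ n)) η = (aut η)⁻¹ •
      (PowerSeries.C (R := ℂ) ((-1 : ℂ) ^ (Multiset.card η.parts)
          * (η.parts.map (fun p => (d : ℂ) * (Υ p : ℂ))).prod)
        * X ^ (2 * m + 2 * Multiset.card η.parts)) := by
  rw [w]
  have h1 : η.parts.map (fun n => -(ac d Υ n))
      = η.parts.map (fun p => PowerSeries.C (R := ℂ) (-((d : ℂ) * (Υ p : ℂ))) * X ^ (2 * p + 2)) :=
    Multiset.map_congr rfl fun p hp => by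
      rw [ac, if_neg (η.parts_pos hp).ne', ← neg_mul, ← map_neg]
  rw [h1, prod_map_monomial (fun p => -((d : ℂ) * (Υ p : ℂ))), η.parts_sum]
  congr 3
  have h2 : η.parts.map (fun p => -((d : ℂ) * (Υ p : ℂ)))
      = η.parts.map (fun p => -(fun q => (d : ℂ) * (Υ q : ℂ)) p) := rfl
  rw [h2, prod_map_neg]

lemma sign_rescale_w {k : ℕ} (η : Nat.Partition k) :
    PowerSeries.C (R := ℂ) ((-1 : ℂ) ^ k) * rescale Complex.I (w (ac d Υ) η)
      = w (fun n => -(ac d Υ n)) η := by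
  rw [w_ac, w_nac, qsmul_eq, qsmul_eq, ← mul_assoc, ← mul_assoc, ← map_mul, ← map_mul,
    rescale_C_mul_X_pow, ← mul_assoc, ← map_mul]
  congr 2
  have hI : (Complex.I : ℂ) ^ (2 * k + 2 * Multiset.card η.parts)
      = (-1 : ℂ) ^ (k + Multiset.card η.parts) := by
    rw [show 2 * k + 2 * Multiset.card η.parts = 2 * (k + Multiset.card η.parts) by ring,
      pow_mul, Complex.I_sq]
  have h2 : ((-1 : ℂ)) ^ k * (-1 : ℂ) ^ k = 1 := by
    rw [← pow_add, ← two_mul, pow_mul]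
    norm_num
  rw [hI, pow_add]
  linear_combination (((aut η)⁻¹ : ℚ) : ℂ) * (-1 : ℂ) ^ (Multiset.card η.parts)
    * (η.parts.map (fun p => (d : ℂ) * (Υ p : ℂ))).prod * h2

lemma X_deriv_w {m : ℕ} (η : Nat.Partition m) :
    X * derivativeFun (w (ac d Υ) η)
      = ((η.parts.map (fun p : ℕ => ((2 * p + 2 : ℕ) : ℚ))).sum) • w (ac d Υ) η := by
  have hsum : ((η.parts.map (fun p : ℕ => ((2 * p + 2 : ℕ) : ℚ))).sum)
      = ((2 * m + 2 * Multiset.card η.parts : ℕ) : ℚ) := by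
    have h1 : η.parts.map (fun p : ℕ => ((2 * p + 2 : ℕ) : ℚ))
        = (η.parts.map (fun p => 2 * p + 2)).map (fun q : ℕ => (q : ℚ)) := by
      rw [Multiset.map_map]; rfl
    rw [h1, ← Nat.cast_multiset_sum, sum_map_affine, η.parts_sum]
  have hw : w (ac d Υ) η = PowerSeries.C (R := ℂ)
      ((((aut η)⁻¹ : ℚ) : ℂ) * (η.parts.map (fun p => (d : ℂ) * (Υ p : ℂ))).prod)
      * X ^ (2 * m + 2 * Multiset.card η.parts) := by
    rw [w_ac, qsmul_eq, ← mul_assoc, ← map_mul]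
  rw [hsum, hw, X_deriv_monomial, qsmul_eq, smul_eq_C_mul]
  norm_cast

/-- the series `∑ (2n+2) a_n x^n` -/
def hser : PowerSeries (PowerSeries ℂ) :=
  PowerSeries.mk fun n => (((2 * n + 2 : ℕ) : ℚ)) • ac d Υ n

lemma Pd_eq :
    (PowerSeries.mk fun k => X * derivativeFun
        ((PowerSeries.coeff (R := PowerSeries ℂ) k) (pw (ac d Υ))))
      = hser d Υ * pw (ac d Υ) := by
  ext1 m
  rw [coeff_mk, coeff_pw, derivativeFun_sum, Finset.mul_sum,
    Finset.sum_congr rfl (fun (η : Nat.Partition m) _ => X_deriv_w d Υ η),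
    master (ac d Υ) (fun p : ℕ => ((2 * p + 2 : ℕ) : ℚ)) m, coeff_mul,
    Finset.Nat.sum_antidiagonal_eq_sum_range_succ_mk]
  have hsub : Finset.Icc 1 m ⊆ Finset.range (m + 1) := by
    intro x hx
    rw [Finset.mem_Icc] at hx
    rw [Finset.mem_range]
    omega
  rw [Finset.sum_subset hsub ?van]
  case van =>
    intro x hx hnx
    have hx0 : x = 0 := by
      rw [Finset.mem_range] at hx
      rw [Finset.mem_Icc] at hnx
      omega
    subst hx0
    simp [ac]
  refine Finset.sum_congr rfl fun j hj => ?_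
  have hcj : (PowerSeries.coeff (R := PowerSeries ℂ) j) (hser d Υ) = ((2 * j + 2 : ℕ) : ℚ) • ac d Υ j :=
    coeff_mk _ _
  have hpj : (PowerSeries.coeff (R := PowerSeries ℂ) (m - j)) (pw (ac d Υ))
      = ∑ μ : Nat.Partition (m - j), w (ac d Υ) μ := coeff_mk _ _
  rw [hcj, hpj, smul_mul_assoc]

/-- the exponential series `exp (b u^2)` -/
def eser (b : ℂ) : PowerSeries ℂ :=
  PowerSeries.mk fun n =>
    if n % 2 = 0 then b ^ (n / 2) / (Nat.factorial (n / 2) : ℂ) else 0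

lemma deriv_eser (b : ℂ) :
    derivativeFun (eser b) = PowerSeries.C (R := ℂ) (2 * b) * (X * eser b) := by
  ext n
  rw [coeff_derivativeFun', coeff_C_mul]
  cases n with
  | zero =>
    rw [coeff_zero_X_mul, mul_zero, eser, coeff_mk]
    norm_num
  | succ n =>
    rw [coeff_succ_X_mul, eser, coeff_mk, coeff_mk]
    rcases Nat.even_or_odd n with he | ho
    · obtain ⟨t, ht⟩ := he
      subst ht
      have h1 : (t + t + 1 + 1) % 2 = 0 := by omega
      have h2 : (t + t) % 2 = 0 := by omega
      have h3 : (t + t + 1 + 1) / 2 = t + 1 := by omega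
      have h4 : (t + t) / 2 = t := by omega
      rw [if_pos h1, if_pos h2, h3, h4, Nat.factorial_succ]
      have hfac : ((Nat.factorial t : ℂ)) ≠ 0 := Nat.cast_ne_zero.2 (Nat.factorial_ne_zero t)
      have ht1 : ((t : ℂ)) + 1 ≠ 0 := by
        have : ((t + 1 : ℕ) : ℂ) ≠ 0 := Nat.cast_ne_zero.2 (by omega)
        push_cast at this
        exact this
      push_cast
      field_simp
      ring
    · obtain ⟨t, ht⟩ := ho
      have h1 : ¬((n + 1 + 1) % 2 = 0) := by omega
      have h2 : ¬(n % 2 = 0) := by omega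
      rw [if_neg h1, if_neg h2]
      ring

lemma eser_mul_rescale (b : ℂ) : eser b * rescale Complex.I (eser b) = 1 := by
  ext n
  rw [coeff_mul, Finset.Nat.sum_antidiagonal_eq_sum_range_succ_mk, PowerSeries.coeff_one]
  rcases Nat.eq_zero_or_pos n with hn | hn
  · subst hn
    rw [if_pos rfl]
    rw [Finset.sum_range_one]
    simp [coeff_rescale, eser, coeff_mk, Nat.factorial]
  rw [if_neg (by omega)]
  rcases Nat.even_or_odd n with he | ho
  swap
  · refine Finset.sum_eq_zero fun k hk => ?_
    rw [Finset.mem_range] at hk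
    simp only [coeff_rescale, eser, coeff_mk]
    rcases Nat.even_or_odd k with hek | hok
    · have h2 : ¬((n - k) % 2 = 0) := by
        obtain ⟨t1, ht1⟩ := hek
        obtain ⟨t2, ht2⟩ := ho
        omega
      rw [if_neg h2] <;> ring
    · have h1 : ¬(k % 2 = 0) := by
        obtain ⟨t1, ht1⟩ := hok
        omega
      rw [if_neg h1] <;> ring
  obtain ⟨m, hm⟩ := he
  have hm1 : 1 ≤ m := by omega
  have hsplit := Finset.sum_filter_add_sum_filter_not (Finset.range (n + 1))
    (fun k => k % 2 = 0)
    (fun k => (PowerSeries.coeff (R := ℂ) k) (eser b)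
      * (PowerSeries.coeff (R := ℂ) (n - k)) (rescale Complex.I (eser b)))
  rw [← hsplit]
  have hodd : ∑ k ∈ (Finset.range (n + 1)).filter (fun k => ¬(k % 2 = 0)),
      (PowerSeries.coeff (R := ℂ) k) (eser b)
        * (PowerSeries.coeff (R := ℂ) (n - k)) (rescale Complex.I (eser b)) = 0 := by
    refine Finset.sum_eq_zero fun k hk => ?_
    rw [Finset.mem_filter] at hk
    simp only [eser, coeff_mk]
    rw [if_neg hk.2] <;> ring
  rw [hodd, add_zero]
  have hbij : ∑ k ∈ (Finset.range (n + 1)).filter (fun k => k % 2 = 0),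
      (PowerSeries.coeff (R := ℂ) k) (eser b)
        * (PowerSeries.coeff (R := ℂ) (n - k)) (rescale Complex.I (eser b))
      = ∑ s ∈ Finset.range (m + 1),
          (b ^ s / (Nat.factorial s : ℂ))
            * ((-1 : ℂ) ^ (m - s) * (b ^ (m - s) / (Nat.factorial (m - s) : ℂ))) := by
    refine Finset.sum_bij' (fun k _ => k / 2) (fun s _ => 2 * s) ?_ ?_ ?_ ?_ ?_
    · intro k hk
      rw [Finset.mem_filter, Finset.mem_range] at hk
      rw [Finset.mem_range]
      omega
    · intro s hs
      rw [Finset.mem_range] at hs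
      rw [Finset.mem_filter, Finset.mem_range]
      omega
    · intro k hk
      rw [Finset.mem_filter] at hk
      omega
    · intro s _
      omega
    · intro k hk
      rw [Finset.mem_filter, Finset.mem_range] at hk
      obtain ⟨hk1, hk2⟩ := hk
      rw [coeff_rescale]
      simp only [eser, coeff_mk]
      rw [if_pos hk2, if_pos (by omega : (n - k) % 2 = 0)]
      have e1 : (n - k) / 2 = m - k / 2 := by omega
      have e2 : Complex.I ^ (n - k) = (-1 : ℂ) ^ (m - k / 2) := by
        rw [show n - k = 2 * (m - k / 2) by omega, pow_mul, Complex.I_sq]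
      rw [e1, e2]
  rw [hbij]
  have key : ∑ s ∈ Finset.range (m + 1),
      b ^ s * (-b) ^ (m - s) * ((Nat.choose m s : ℕ) : ℂ) = 0 := by
    rw [← add_pow]
    rw [add_neg_cancel, zero_pow (by omega : m ≠ 0)]
  have hterm : ∀ s ∈ Finset.range (m + 1),
      (b ^ s / (Nat.factorial s : ℂ))
        * ((-1 : ℂ) ^ (m - s) * (b ^ (m - s) / (Nat.factorial (m - s) : ℂ)))
      = ((Nat.factorial m : ℂ))⁻¹ * (b ^ s * (-b) ^ (m - s) * ((Nat.choose m s : ℕ) : ℂ)) := by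
    intro s hs
    rw [Finset.mem_range] at hs
    have hsm : s ≤ m := by omega
    have hC := Nat.choose_mul_factorial_mul_factorial hsm
    have hCc : ((Nat.choose m s : ℕ) : ℂ) * (Nat.factorial s : ℂ)
        * (Nat.factorial (m - s) : ℂ) = (Nat.factorial m : ℂ) := by
      exact_mod_cast congrArg (fun x : ℕ => (x : ℂ)) hC
    have hf1 : ((Nat.factorial s : ℕ) : ℂ) ≠ 0 := Nat.cast_ne_zero.2 (Nat.factorial_ne_zero s)
    have hf2 : ((Nat.factorial (m - s) : ℕ) : ℂ) ≠ 0 :=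
      Nat.cast_ne_zero.2 (Nat.factorial_ne_zero (m - s))
    have hf3 : ((Nat.factorial m : ℕ) : ℂ) ≠ 0 := Nat.cast_ne_zero.2 (Nat.factorial_ne_zero m)
    have hCne : ((Nat.choose m s : ℕ) : ℂ) ≠ 0 :=
      Nat.cast_ne_zero.2 (Nat.choose_pos hsm).ne'
    rw [neg_pow b (m - s), ← hCc]
    field_simp
  rw [Finset.sum_congr rfl hterm, ← Finset.mul_sum, key, mul_zero]

end Concrete

end

end VRec



/-- Theorem 2 verification: over the complex numbers (so that the substitution
`u ↦ √-1 ⬝ u` makes sense; all data are rational), let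
`E = exp (d Υ₀ u²)` and
`V₀ = (1/d) E`, and for `i ≥ 1`
`V_i = u^(2i) E ∑_{η ⊢ i} u^(2ℓ(η)) d^(ℓ(η)-1) Υ^η / Aut(η)`.
Then for every `i ≥ 1`:
`∑_{k=0}^{i} (-1)^(i-k) V_k'(u) ⬝ V_{i-k}(√-1 u) = ((2i+2)/d) Υ_i u^(2i+1)`. -/
theorem V_series_recursion (d : ℚ) (hd : d ≠ 0) (Υ : ℕ → ℚ)
    (E : PowerSeries ℂ)
    (hE : E = PowerSeries.mk fun n =>
      if n % 2 = 0 then ((d * Υ 0 : ℚ) : ℂ) ^ (n / 2) / (Nat.factorial (n / 2) : ℂ) else 0)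
    (V : ℕ → PowerSeries ℂ)
    (hV0 : V 0 = PowerSeries.C (R := ℂ) ((1 / d : ℚ) : ℂ) * E)
    (hVi : ∀ i, 1 ≤ i → V i = PowerSeries.X ^ (2 * i) * E *
      ∑ η : Nat.Partition i,
        PowerSeries.X ^ (2 * Multiset.card η.parts) *
          PowerSeries.C (R := ℂ)
            (((d ^ (Multiset.card η.parts - 1) * (η.parts.map Υ).prod /
                ∏ p ∈ η.parts.toFinset, (Nat.factorial (η.parts.count p) : ℚ) : ℚ) : ℂ)))
    (i : ℕ) (hi : 1 ≤ i) :
    ∑ k ∈ Finset.range (i + 1),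
      ((-1 : ℂ) ^ (i - k)) •
        ((V k).derivativeFun * PowerSeries.rescale Complex.I (V (i - k)))
      = PowerSeries.C (R := ℂ) (((2 * i + 2) / d * Υ i : ℚ) : ℂ) * PowerSeries.X ^ (2 * i + 1) := by
  classical
  have hd' : (d : ℂ) ≠ 0 := Rat.cast_ne_zero.2 hd
  set b : ℂ := ((d * Υ 0 : ℚ) : ℂ) with hbdef
  have hEe : E = VRec.eser b := by rw [hE]; rfl
  set P : PowerSeries (PowerSeries ℂ) := VRec.pw (VRec.ac d Υ) with hPdef
  set Qs : PowerSeries (PowerSeries ℂ) := VRec.pw (fun n => -(VRec.ac d Υ n)) with hQdef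
  -- closed form of V
  have hVc : ∀ k, V k = PowerSeries.C (R := ℂ) ((d : ℂ))⁻¹
      * (E * (PowerSeries.coeff (R := PowerSeries ℂ) k) P) := by
    intro k
    rcases Nat.eq_zero_or_pos k with rfl | hk
    · rw [hV0, hPdef, VRec.coeff_pw_zero, mul_one]
      congr 1
      push_cast
      ring
    · rw [hVi k hk, hPdef, VRec.coeff_pw, Finset.mul_sum, Finset.mul_sum, Finset.mul_sum]
      refine Finset.sum_congr rfl fun η _ => ?_
      have hl : 1 ≤ Multiset.card η.parts := by
        rw [Nat.one_le_iff_ne_zero]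
        intro hcon
        have hparts : η.parts = 0 := Multiset.card_eq_zero.1 hcon
        have := η.parts_sum
        rw [hparts] at this
        simp at this
        omega
      have e2 : (d : ℂ) ^ (Multiset.card η.parts)
          = (d : ℂ) ^ (Multiset.card η.parts - 1) * (d : ℂ) := by
        rw [← pow_succ]
        congr 1
        omega
      have hauta : ((VRec.aut η : ℚ) : ℂ) ≠ 0 := Rat.cast_ne_zero.2 (VRec.aut_pos η).ne'
      have hs : (((d ^ (Multiset.card η.parts - 1) * (η.parts.map Υ).prod /
              ∏ p ∈ η.parts.toFinset, (Nat.factorial (η.parts.count p) : ℚ) : ℚ) : ℂ))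
          = (d : ℂ)⁻¹ * (((VRec.aut η)⁻¹ : ℚ) : ℂ)
            * ((d : ℂ) ^ (Multiset.card η.parts)
              * (η.parts.map (fun p => (Υ p : ℂ))).prod) := by
        have haut : (∏ p ∈ η.parts.toFinset, (Nat.factorial (η.parts.count p) : ℚ))
            = VRec.aut η := rfl
        rw [haut]
        push_cast [Multiset.map_map]
        simp only [Function.comp_def]
        rw [e2]
        field_simp
      rw [VRec.w_ac, VRec.qsmul_eq,
        VRec.prod_map_mul_left ((d : ℂ)) (fun p => (Υ p : ℂ)), hs]
      simp only [map_mul, map_pow]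
      ring
  have hDE : derivativeFun E = PowerSeries.C (R := ℂ) (2 * b) * (X * E) := by
    rw [hEe]; exact VRec.deriv_eser b
  have hEE : E * rescale Complex.I E = 1 := by
    rw [hEe]; exact VRec.eser_mul_rescale b
  have hsign : ∀ j, PowerSeries.C (R := ℂ) ((-1 : ℂ) ^ j)
      * rescale Complex.I ((PowerSeries.coeff (R := PowerSeries ℂ) j) P)
      = (PowerSeries.coeff (R := PowerSeries ℂ) j) Qs := by
    intro j
    rw [hPdef, hQdef, VRec.coeff_pw, VRec.coeff_pw, map_sum, Finset.mul_sum]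
    exact Finset.sum_congr rfl fun η _ => VRec.sign_rescale_w d Υ η
  have hPQ : P * Qs = 1 := VRec.pw_mul_pw_neg _
  have hstep : ∀ k ∈ Finset.range (i + 1),
      X * (((-1 : ℂ) ^ (i - k)) • ((V k).derivativeFun * rescale Complex.I (V (i - k))))
        = (PowerSeries.C (R := ℂ) (2 * b) * X ^ 2
              * ((PowerSeries.coeff (R := PowerSeries ℂ) k) P
                  * (PowerSeries.coeff (R := PowerSeries ℂ) (i - k)) Qs)
            + (X * derivativeFun ((PowerSeries.coeff (R := PowerSeries ℂ) k) P))
                * (PowerSeries.coeff (R := PowerSeries ℂ) (i - k)) Qs)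
          * (PowerSeries.C (R := ℂ) ((d : ℂ)⁻¹) * PowerSeries.C (R := ℂ) ((d : ℂ)⁻¹) * 1) := by
    intro k _
    have h2 : (V k).derivativeFun = PowerSeries.C (R := ℂ) (d : ℂ)⁻¹
        * ((PowerSeries.C (R := ℂ) (2 * b) * (X * E)) * (PowerSeries.coeff (R := PowerSeries ℂ) k) P
            + E * derivativeFun ((PowerSeries.coeff (R := PowerSeries ℂ) k) P)) := by
      rw [hVc k, VRec.deriv_C_mul, derivativeFun_mul, smul_eq_mul, smul_eq_mul, hDE]
      ring
    have h3 : rescale Complex.I (V (i - k)) = PowerSeries.C (R := ℂ) (d : ℂ)⁻¹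
        * (rescale Complex.I E
            * rescale Complex.I ((PowerSeries.coeff (R := PowerSeries ℂ) (i - k)) P)) := by
      rw [hVc (i - k), map_mul, map_mul, VRec.rescale_C']
    calc X * (((-1 : ℂ) ^ (i - k)) • ((V k).derivativeFun * rescale Complex.I (V (i - k))))
        = (PowerSeries.C (R := ℂ) (2 * b) * X ^ 2
              * ((PowerSeries.coeff (R := PowerSeries ℂ) k) P
                  * (PowerSeries.C (R := ℂ) ((-1 : ℂ) ^ (i - k))
                      * rescale Complex.I ((PowerSeries.coeff (R := PowerSeries ℂ) (i - k)) P)))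
            + (X * derivativeFun ((PowerSeries.coeff (R := PowerSeries ℂ) k) P))
                * (PowerSeries.C (R := ℂ) ((-1 : ℂ) ^ (i - k))
                    * rescale Complex.I ((PowerSeries.coeff (R := PowerSeries ℂ) (i - k)) P)))
          * (PowerSeries.C (R := ℂ) ((d : ℂ)⁻¹) * PowerSeries.C (R := ℂ) ((d : ℂ)⁻¹)
              * (E * rescale Complex.I E)) := by
          rw [h2, h3, smul_eq_C_mul]
          ring
      _ = _ := by rw [hsign (i - k), hEE]
  have hconv1 : ∑ k ∈ Finset.range (i + 1),
      (PowerSeries.coeff (R := PowerSeries ℂ) k) P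
        * (PowerSeries.coeff (R := PowerSeries ℂ) (i - k)) Qs = 0 := by
    have h := congrArg (PowerSeries.coeff (R := PowerSeries ℂ) i) hPQ
    rw [coeff_mul, Finset.Nat.sum_antidiagonal_eq_sum_range_succ_mk,
      PowerSeries.coeff_one, if_neg (by omega)] at h
    exact h
  have hconv2 : ∑ k ∈ Finset.range (i + 1),
      (X * derivativeFun ((PowerSeries.coeff (R := PowerSeries ℂ) k) P))
        * (PowerSeries.coeff (R := PowerSeries ℂ) (i - k)) Qs
      = ((2 * i + 2 : ℕ) : ℚ) • VRec.ac d Υ i := by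
    have hPdQ : (PowerSeries.mk fun k => X * derivativeFun
        ((PowerSeries.coeff (R := PowerSeries ℂ) k) P)) * Qs = VRec.hser d Υ := by
      rw [hPdef, VRec.Pd_eq, mul_assoc]
      rw [hPQ, mul_one]
    have h := congrArg (PowerSeries.coeff (R := PowerSeries ℂ) i) hPdQ
    rw [coeff_mul, Finset.Nat.sum_antidiagonal_eq_sum_range_succ_mk] at h
    simp only [VRec.hser, coeff_mk] at h
    exact h
  have hXsum : X * (∑ k ∈ Finset.range (i + 1),
      ((-1 : ℂ) ^ (i - k)) • ((V k).derivativeFun * rescale Complex.I (V (i - k))))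
      = (PowerSeries.C (R := ℂ) (2 * b) * X ^ 2 * (0 : PowerSeries ℂ)
          + ((2 * i + 2 : ℕ) : ℚ) • VRec.ac d Υ i)
        * (PowerSeries.C (R := ℂ) ((d : ℂ)⁻¹) * PowerSeries.C (R := ℂ) ((d : ℂ)⁻¹) * 1) := by
    rw [Finset.mul_sum, Finset.sum_congr rfl hstep, ← Finset.sum_mul,
      Finset.sum_add_distrib, ← Finset.mul_sum, hconv1, hconv2]
  have hfin : (PowerSeries.C (R := ℂ) (2 * b) * X ^ 2 * (0 : PowerSeries ℂ)
          + ((2 * i + 2 : ℕ) : ℚ) • VRec.ac d Υ i)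
        * (PowerSeries.C (R := ℂ) ((d : ℂ)⁻¹) * PowerSeries.C (R := ℂ) ((d : ℂ)⁻¹) * 1)
      = X * (PowerSeries.C (R := ℂ) (((2 * i + 2) / d * Υ i : ℚ) : ℂ)
          * PowerSeries.X ^ (2 * i + 1)) := by
    have hsc : (((2 * i + 2) / d * Υ i : ℚ) : ℂ)
        = (((2 * i + 2 : ℕ) : ℚ) : ℂ) * ((d : ℂ) * (Υ i : ℂ))
            * ((d : ℂ)⁻¹ * (d : ℂ)⁻¹) := by
      push_cast
      field_simp
    rw [VRec.ac, if_neg (by omega), VRec.qsmul_eq, hsc]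
    simp only [map_mul]
    ring
  have hX : X * (∑ k ∈ Finset.range (i + 1),
      ((-1 : ℂ) ^ (i - k)) • ((V k).derivativeFun * rescale Complex.I (V (i - k))))
      = X * (PowerSeries.C (R := ℂ) (((2 * i + 2) / d * Υ i : ℚ) : ℂ)
          * PowerSeries.X ^ (2 * i + 1)) := by
    rw [hXsum, hfin]
  exact mul_left_cancel₀ PowerSeries.X_ne_zero hX
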